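/- arXiv:1308.6658 — 3 statements merged into one kernel-verified Lean document; each statement's English description precedes it below -/
import Mathlib

section
/- Let G : [a,b] → ℝ be a monotone Lipschitz continuous function with Lipschitz constant L > 0. Then for all c, d ∈ [a,b], |∫_c^d (G(x) - G(c)) dx| ≥ (G(d) - G(c))² / (2L). -/
open MeasureTheory intervalIntegral

lemma key_lemma (L : ℝ) (hL : 0 < L) (G : ℝ → ℝ) (c d : ℝ) (hcd : c ≤ d)
    (hmono : MonotoneOn G (Set.Icc c d))
    (hLip : ∀ x ∈ Set.Icc c d, ∀ y ∈ Set.Icc c d, |G x - G y| ≤ L * |x - y|) :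
    (G d - G c) ^ 2 / (2 * L) ≤ ∫ x in c..d, (G x - G c) := by
  set M := G d - G c with hM
  have hcm : c ∈ Set.Icc c d := ⟨le_refl _, hcd⟩
  have hdm : d ∈ Set.Icc c d := ⟨hcd, le_refl _⟩
  have hM0 : 0 ≤ M := sub_nonneg.2 (hmono hcm hdm hcd)
  have hML : M ≤ L * (d - c) := by
    have := hLip d hdm c hcm
    rw [abs_of_nonneg hM0] at this
    rwa [abs_of_nonneg (by linarith : (0:ℝ) ≤ d - c)] at this
  set s := d - M / L with hs
  have hs1 : c ≤ s := by
    rw [hs]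
    have : M / L ≤ d - c := (div_le_iff₀ hL).2 (by linarith)
    linarith
  have hs2 : s ≤ d := by
    rw [hs]
    have : 0 ≤ M / L := div_nonneg hM0 hL.le
    linarith
  -- continuity of G on Icc c d
  have hGcont : ContinuousOn G (Set.Icc c d) := by
    have : LipschitzOnWith (Real.toNNReal L) G (Set.Icc c d) := by
      rw [lipschitzOnWith_iff_dist_le_mul]
      intro x hx y hy
      rw [Real.dist_eq, Real.dist_eq]
      have := hLip x hx y hy
      simpa [Real.coe_toNNReal L hL.le] using this
    exact this.continuousOn
  have hGint : IntervalIntegrable (fun x => G x - G c) volume c d := by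
    apply ContinuousOn.intervalIntegrable
    rw [Set.uIcc_of_le hcd]
    exact hGcont.sub continuousOn_const
  set φ : ℝ → ℝ := fun x => max 0 (M - L * (d - x)) with hφ
  have hφcont : Continuous φ := by fun_prop
  have hle : ∀ x ∈ Set.Icc c d, φ x ≤ G x - G c := by
    intro x hx
    apply max_le
    · exact sub_nonneg.2 (hmono hcm hx hx.1)
    · have h1 := hLip d hdm x hx
      rw [abs_of_nonneg (by linarith [hx.2] : (0:ℝ) ≤ d - x)] at h1
      have h2 : G d - G x ≤ L * (d - x) := (le_abs_self _).trans h1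
      linarith
  have hmono_int : ∫ x in c..d, φ x ≤ ∫ x in c..d, (G x - G c) :=
    intervalIntegral.integral_mono_on hcd (hφcont.intervalIntegrable _ _) hGint hle
  have hsplit : ∫ x in c..d, φ x = (∫ x in c..s, φ x) + ∫ x in s..d, φ x :=
    (intervalIntegral.integral_add_adjacent_intervals (hφcont.intervalIntegrable _ _)
      (hφcont.intervalIntegrable _ _)).symm
  have h1 : ∫ x in c..s, φ x = 0 := by
    rw [intervalIntegral.integral_congr (g := fun _ => (0:ℝ)), intervalIntegral.integral_zero]
    intro x hx
    rw [Set.uIcc_of_le hs1] at hx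
    have : M - L * (d - x) ≤ 0 := by
      have hxs : x ≤ s := hx.2
      have : M / L ≤ d - x := by rw [hs] at hxs; linarith
      rw [div_le_iff₀ hL] at this
      nlinarith
    simp [hφ, max_eq_left this]
  have h2 : ∫ x in s..d, φ x = M ^ 2 / (2 * L) := by
    rw [intervalIntegral.integral_congr (g := fun x => L * x + (M - L * d))]
    · rw [intervalIntegral.integral_add
        ((by fun_prop : Continuous fun x : ℝ => L * x).intervalIntegrable _ _)
        intervalIntegrable_const]
      rw [intervalIntegral.integral_const_mul, integral_id, intervalIntegral.integral_const]
      rw [hs]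
      field_simp
      linear_combination (2 * M ^ 2 - 2 * L * d * M) * mul_inv_cancel₀ hL.ne'
    · intro x hx
      rw [Set.uIcc_of_le hs2] at hx
      have : 0 ≤ M - L * (d - x) := by
        have hxs : s ≤ x := hx.1
        have : d - x ≤ M / L := by rw [hs] at hxs; linarith
        rw [le_div_iff₀ hL] at this
        nlinarith
      simp only [hφ]
      rw [max_eq_right this]
      ring
  rw [hsplit, h1, h2, zero_add] at hmono_int
  exact hmono_int

lemma main_mono (a b L : ℝ) (hL : 0 < L) (G : ℝ → ℝ)
    (hmono : MonotoneOn G (Set.Icc a b))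
    (hLip : ∀ x ∈ Set.Icc a b, ∀ y ∈ Set.Icc a b, |G x - G y| ≤ L * |x - y|)
    (c d : ℝ) (hc : c ∈ Set.Icc a b) (hd : d ∈ Set.Icc a b) :
    (G d - G c) ^ 2 / (2 * L) ≤ ∫ x in c..d, (G x - G c) := by
  rcases le_total c d with hcd | hdc
  · have hsub : Set.Icc c d ⊆ Set.Icc a b := Set.Icc_subset_Icc hc.1 hd.2
    exact key_lemma L hL G c d hcd (hmono.mono hsub)
      (fun x hx y hy => hLip x (hsub hx) y (hsub hy))
  · set H : ℝ → ℝ := fun x => -G (-x) with hH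
    have hmem : ∀ x ∈ Set.Icc (-c) (-d), -x ∈ Set.Icc a b := by
      intro x hx
      constructor
      · have := hx.2; have := hd.1; linarith
      · have := hx.1; have := hc.2; linarith
    have hmonoH : MonotoneOn H (Set.Icc (-c) (-d)) := by
      intro x hx y hy hxy
      have : G (-y) ≤ G (-x) := hmono (hmem y hy) (hmem x hx) (by linarith)
      simp only [hH]
      linarith
    have hLipH : ∀ x ∈ Set.Icc (-c) (-d), ∀ y ∈ Set.Icc (-c) (-d),
        |H x - H y| ≤ L * |x - y| := by
      intro x hx y hy
      have h := hLip (-y) (hmem y hy) (-x) (hmem x hx)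
      simp only [hH]
      rw [show -G (-x) - -G (-y) = G (-y) - G (-x) from by ring,
        show |x - y| = |(-y) - (-x)| from by rw [neg_sub_neg]]
      exact h
    have hkey := key_lemma L hL H (-c) (-d) (by linarith) hmonoH hLipH
    have heq1 : (H (-d) - H (-c)) ^ 2 = (G d - G c) ^ 2 := by
      simp only [hH, neg_neg]; ring
    have heq2 : (∫ t in (-c)..(-d), (H t - H (-c))) = ∫ x in c..d, (G x - G c) := by
      have h1 : (∫ t in (-c)..(-d), (H t - H (-c)))
          = ∫ t in (-c)..(-d), (fun u => G c - G u) (-t) := by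
        simp only [hH, neg_neg]
        congr 1
        funext t
        ring
      rw [h1, intervalIntegral.integral_comp_neg (fun u => G c - G u)]
      simp only [neg_neg]
      rw [intervalIntegral.integral_symm, ← intervalIntegral.integral_neg]
      congr 1
      funext x
      ring
    rw [heq1, heq2] at hkey
    exact hkey

theorem lipschitz_monotone_integral_lower_bound
    (a b L : ℝ) (hab : a ≤ b) (G : ℝ → ℝ) (hL : 0 < L)
    (hmono : MonotoneOn G (Set.Icc a b) ∨ AntitoneOn G (Set.Icc a b))
    (hLip : ∀ x ∈ Set.Icc a b, ∀ y ∈ Set.Icc a b, |G x - G y| ≤ L * |x - y|)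
    (c d : ℝ) (hc : c ∈ Set.Icc a b) (hd : d ∈ Set.Icc a b) :
    |∫ x in c..d, (G x - G c)| ≥ (G d - G c) ^ 2 / (2 * L) := by
  rcases hmono with hm | ha
  · exact le_trans (main_mono a b L hL G hm hLip c d hc hd) (le_abs_self _)
  · have hm : MonotoneOn (fun x => -G x) (Set.Icc a b) := ha.neg
    have hLip' : ∀ x ∈ Set.Icc a b, ∀ y ∈ Set.Icc a b,
        |(fun x => -G x) x - (fun x => -G x) y| ≤ L * |x - y| := by
      intro x hx y hy
      simp only []
      rw [show -G x - -G y = G y - G x from by ring,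
        show |x - y| = |y - x| from abs_sub_comm x y]
      exact hLip y hy x hx
    have h := main_mono a b L hL (fun x => -G x) hm hLip' c d hc hd
    have heq : (∫ x in c..d, ((fun x => -G x) x - (fun x => -G x) c))
        = -∫ x in c..d, (G x - G c) := by
      rw [← intervalIntegral.integral_neg]
      congr 1
      funext x
      ring
    have heq2 : ((fun x => -G x) d - (fun x => -G x) c) ^ 2 = (G d - G c) ^ 2 := by
      simp only []; ring
    rw [heq, heq2] at h
    exact le_trans h (neg_le_abs _)
end

section
/- Let F : ℝ × ℝ → ℝ be nondecreasing in its first argument and nonincreasing in its second argument. Then for all u, v, k ∈ ℝ, sign⁺(u - k)·(F(u, v) - F(k, k)) ≥ F(max(u,k), max(v,k)) - F(k, k). -/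
theorem monotone_flux_signPlus_inequality (F : ℝ → ℝ → ℝ)
    (hmono₁ : ∀ b : ℝ, Monotone fun a => F a b)
    (hmono₂ : ∀ a : ℝ, Antitone fun b => F a b)
    (u v k : ℝ) :
    (if 0 < u - k then (1 : ℝ) else 0) * (F u v - F k k) ≥
      F (max u k) (max v k) - F k k := by
  split_ifs with h
  · have hu : max u k = u := max_eq_left (by linarith)
    rw [hu, one_mul]
    have := hmono₂ u (le_max_left v k)
    simp only at this
    linarith
  · have hu : max u k = k := max_eq_right (by linarith)
    rw [hu, zero_mul]
    have := hmono₂ k (le_max_right v k)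
    simp only at this
    linarith
end

section
/- Let F : ℝ² → ℝ be Lipschitz with constant L, nondecreasing in the first argument and nonincreasing in the second. Let a ≤ c ≤ d ≤ b be reals. Then ∫_a^b (F(b,a) - F(s,s)) ds ≥ (1/(2L))·(F(d,c) - F(d,d))². -/
open intervalIntegral

theorem weak_BV_key_inequality (F : ℝ → ℝ → ℝ) (L : ℝ) (hL : 0 < L)
    (hLip₁ : ∀ a a' b : ℝ, |F a b - F a' b| ≤ L * |a - a'|)
    (hLip₂ : ∀ a b b' : ℝ, |F a b - F a b'| ≤ L * |b - b'|)
    (hmono₁ : ∀ b : ℝ, Monotone fun a => F a b)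
    (hmono₂ : ∀ a : ℝ, Antitone fun b => F a b)
    (a b c d : ℝ) (hac : a ≤ c) (hcd : c ≤ d) (hdb : d ≤ b) :
    (∫ s in a..b, (F b a - F s s)) ≥ (F d c - F d d) ^ 2 / (2 * L) := by
  set M : ℝ := F d c - F d d with hMdef
  have hM : 0 ≤ M := sub_nonneg.2 (hmono₂ d hcd)
  have hMle : M ≤ L * (d - c) := by
    calc M ≤ |F d c - F d d| := le_abs_self _
      _ ≤ L * |c - d| := hLip₂ d c d
      _ = L * (d - c) := by rw [abs_sub_comm, abs_of_nonneg (by linarith)]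
  set δ : ℝ := M / L with hδdef
  have hδ0 : 0 ≤ δ := div_nonneg hM hL.le
  have hδle : δ ≤ d - c := (div_le_iff₀ hL).2 (by linarith)
  have hcont : Continuous fun s : ℝ => F s s := by
    have hlip : LipschitzWith (Real.toNNReal (2 * L)) fun s : ℝ => F s s := by
      apply LipschitzWith.of_dist_le_mul
      intro x y
      simp only [Real.dist_eq]
      calc |F x x - F y y| ≤ |F x x - F y x| + |F y x - F y y| :=
            abs_sub_le (F x x) (F y x) (F y y)
        _ ≤ L * |x - y| + L * |x - y| := add_le_add (hLip₁ x y x) (hLip₂ y x y)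
        _ = (Real.toNNReal (2 * L) : ℝ) * |x - y| := by
            rw [Real.coe_toNNReal _ (by positivity)]; ring
    exact hlip.continuous
  have hint : ∀ p q : ℝ, IntervalIntegrable (fun s => F b a - F s s) MeasureTheory.volume p q :=
    fun p q => (continuous_const.sub hcont).intervalIntegrable p q
  have hg : ∀ s : ℝ, a ≤ s → s ≤ b → 0 ≤ F b a - F s s := by
    intro s h1 h2
    have h3 := (hmono₁ s) h2
    have h4 := (hmono₂ b) h1
    simp only at h3 h4
    linarith
  have hmid : M ^ 2 / (2 * L) ≤ ∫ s in (d - δ)..d, (F b a - F s s) := by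
    have hle : (∫ s in (d - δ)..d, ((M - L * d) + L * s))
        ≤ ∫ s in (d - δ)..d, (F b a - F s s) := by
      apply intervalIntegral.integral_mono_on (by linarith)
        ((show Continuous fun s : ℝ => (M - L * d) + L * s from continuous_const.add (continuous_const.mul continuous_id')).intervalIntegrable _ _)
        (hint _ _)
      intro s hs
      obtain ⟨hs1, hs2⟩ := hs
      have h1 : F d c ≤ F b a := le_trans ((hmono₂ d) hac) ((hmono₁ a) hdb)
      have h2 : F s s ≤ F d s := (hmono₁ s) hs2
      have h3 : F d s - F d d ≤ L * (d - s) := by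
        have h := hLip₂ d s d
        have habs : |s - d| = d - s := by
          rw [abs_sub_comm]; exact abs_of_nonneg (by linarith)
        calc F d s - F d d ≤ |F d s - F d d| := le_abs_self _
          _ ≤ L * |s - d| := h
          _ = L * (d - s) := by rw [habs]
      have hMeq : M = F d c - F d d := hMdef
      linarith
    have hval : (∫ s in (d - δ)..d, ((M - L * d) + L * s)) = M ^ 2 / (2 * L) := by
      rw [intervalIntegral.integral_add (intervalIntegrable_const)
        ((show Continuous fun s : ℝ => L * s from continuous_const.mul continuous_id').intervalIntegrable _ _),
        intervalIntegral.integral_const, intervalIntegral.integral_const_mul, integral_id]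
      rw [smul_eq_mul, hδdef]
      field_simp
      ring
    linarith
  have h1 : 0 ≤ ∫ s in a..(d - δ), (F b a - F s s) := by
    apply intervalIntegral.integral_nonneg (by linarith)
    intro u hu
    exact hg u hu.1 (by linarith [hu.2])
  have h2 : 0 ≤ ∫ s in d..b, (F b a - F s s) := by
    apply intervalIntegral.integral_nonneg hdb
    intro u hu
    exact hg u (by linarith [hu.1]) hu.2
  have hsplit2 : (∫ s in (d - δ)..d, (F b a - F s s)) + ∫ s in d..b, (F b a - F s s)
      = ∫ s in (d - δ)..b, (F b a - F s s) :=
    intervalIntegral.integral_add_adjacent_intervals (hint _ _) (hint _ _)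
  have hsplit1 : (∫ s in a..(d - δ), (F b a - F s s)) + ∫ s in (d - δ)..b, (F b a - F s s)
      = ∫ s in a..b, (F b a - F s s) :=
    intervalIntegral.integral_add_adjacent_intervals (hint _ _) (hint _ _)
  linarith
end
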